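/- (Distance of Tanner codes, Sipser–Spielman/Zémor) Let n, d ≥ 1, q ≥ 2, let 0 ≤ λ and 0 ≤ δ₀ ≤ 1, let σ : Fin n × Fin d ≃ Fin n × Fin d be a bijection specifying a d-regular bipartite graph that is λ-mixing, and let C₀ ⊆ (Fin d → Fin q) be a code in which any two distinct codewords differ in at least δ₀·d coordinates. Let f, g : Fin n × Fin d → Fin q with f ≠ g be such that every left row and every right row of both f and g belongs to C₀. Then the fraction of edges e ∈ Fin n × Fin d with f(e) ≠ g(e) is at least δ₀·(δ₀ − λ). -/

import Mathlib

/-- A `d`-regular bipartite graph on left/right vertex sets `Fin n` with edge set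
`Fin n × Fin d` (edge `(ℓ,i)` is the `i`-th edge of left vertex `ℓ`, and `σ (ℓ,i) = (r,j)`
means it is the `j`-th edge of right vertex `r`) is `λ`-mixing if the expander mixing
inequality holds for all real-valued functions on the two sides. -/
def IsMixing (n d : ℕ) (σ : Fin n × Fin d ≃ Fin n × Fin d) (lam : ℝ) : Prop :=
  ∀ F G : Fin n → ℝ,
    |(∑ e : Fin n × Fin d, F e.1 * G (σ e).1) / ((n : ℝ) * d)
        - ((∑ ℓ, F ℓ) / (n : ℝ)) * ((∑ r, G r) / (n : ℝ))|
      ≤ lam * Real.sqrt ((∑ ℓ, F ℓ ^ 2) / (n : ℝ)) * Real.sqrt ((∑ r, G r ^ 2) / (n : ℝ))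


private lemma tanner_arith (δ₀ lam a b D : ℝ) (hδ₀0 : 0 ≤ δ₀)
    (haPos : 0 < a) (hbPos : 0 < b)
    (h1 : δ₀ * a ≤ D) (h2 : δ₀ * b ≤ D)
    (h3 : D ≤ a * b + lam * Real.sqrt a * Real.sqrt b) :
    δ₀ * (δ₀ - lam) ≤ D := by
  set sa : ℝ := Real.sqrt a with hsa'
  set sb : ℝ := Real.sqrt b with hsb'
  have hsa2 : sa ^ 2 = a := Real.sq_sqrt haPos.le
  have hsb2 : sb ^ 2 = b := Real.sq_sqrt hbPos.le
  have hsaPos : 0 < sa := Real.sqrt_pos.2 haPos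
  have hsbPos : 0 < sb := Real.sqrt_pos.2 hbPos
  rw [← hsa2] at h1 h3
  rw [← hsb2] at h2 h3
  have key : δ₀ * (sa * sb) ≤ D := by
    nlinarith [mul_nonneg hδ₀0 (sq_nonneg (sa - sb)), h1, h2]
  have h4 : δ₀ - lam ≤ sa * sb := by
    have hp : 0 < sa * sb := mul_pos hsaPos hsbPos
    have h6 := key.trans h3
    have h5 : (δ₀ - lam) * (sa * sb) ≤ (sa * sb) * (sa * sb) := by nlinarith [h6]
    exact le_of_mul_le_mul_right h5 hp
  calc δ₀ * (δ₀ - lam) ≤ δ₀ * (sa * sb) := mul_le_mul_of_nonneg_left h4 hδ₀0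
    _ ≤ D := key

/-- **Distance of Tanner codes (Sipser–Spielman / Zémor).** If the inner code `C₀` has
minimum distance `δ₀·d` and the graph is `λ`-mixing, then any two distinct words all of
whose left and right rows lie in `C₀` differ on at least a `δ₀(δ₀ - λ)` fraction of edges. -/
theorem tanner_code_distance (n d q : ℕ) (hn : 1 ≤ n) (hd : 1 ≤ d) (hq : 2 ≤ q)
    (lam δ₀ : ℝ) (hlam : 0 ≤ lam) (hδ₀0 : 0 ≤ δ₀) (hδ₀1 : δ₀ ≤ 1)
    (σ : Fin n × Fin d ≃ Fin n × Fin d) (hmix : IsMixing n d σ lam)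
    (C₀ : Set (Fin d → Fin q))
    (hC₀ : ∀ u ∈ C₀, ∀ v ∈ C₀, u ≠ v → δ₀ * d ≤ (hammingDist u v : ℝ))
    (f g : Fin n × Fin d → Fin q) (hfg : f ≠ g)
    (hfL : ∀ ℓ : Fin n, (fun i => f (ℓ, i)) ∈ C₀)
    (hfR : ∀ r : Fin n, (fun j => f (σ.symm (r, j))) ∈ C₀)
    (hgL : ∀ ℓ : Fin n, (fun i => g (ℓ, i)) ∈ C₀)
    (hgR : ∀ r : Fin n, (fun j => g (σ.symm (r, j))) ∈ C₀) :
    δ₀ * (δ₀ - lam) ≤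
      ((Finset.univ.filter fun e : Fin n × Fin d => f e ≠ g e).card : ℝ) / ((n : ℝ) * d) := by
  classical
  have hn' : (0:ℝ) < n := by exact_mod_cast hn
  have hd' : (0:ℝ) < d := by exact_mod_cast hd
  have hN : (0:ℝ) < (n:ℝ) * d := mul_pos hn' hd'
  set S : Finset (Fin n) :=
    Finset.univ.filter (fun ℓ => (fun i => f (ℓ, i)) ≠ (fun i => g (ℓ, i))) with hSdef
  set T : Finset (Fin n) :=
    Finset.univ.filter
      (fun r => (fun j => f (σ.symm (r, j))) ≠ (fun j => g (σ.symm (r, j)))) with hTdef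
  set Df : Finset (Fin n × Fin d) := Finset.univ.filter (fun e => f e ≠ g e) with hDfdef
  -- left counting
  have hsumL : Df.card
      = ∑ ℓ, (Finset.univ.filter (fun i => f (ℓ, i) ≠ g (ℓ, i))).card := by
    rw [hDfdef, Finset.card_filter, Fintype.sum_prod_type]
    exact Finset.sum_congr rfl fun ℓ _ => (Finset.card_filter _ _).symm
  have hDleft : δ₀ * d * S.card ≤ (Df.card : ℝ) := by
    have h1 : ∀ ℓ ∈ S, δ₀ * d
        ≤ ((Finset.univ.filter (fun i => f (ℓ, i) ≠ g (ℓ, i))).card : ℝ) := by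
      intro ℓ hℓ
      have hne : (fun i => f (ℓ, i)) ≠ (fun i => g (ℓ, i)) := (Finset.mem_filter.1 hℓ).2
      simpa [hammingDist] using hC₀ _ (hfL ℓ) _ (hgL ℓ) hne
    calc δ₀ * d * S.card = ∑ _ℓ ∈ S, δ₀ * d := by rw [Finset.sum_const]; ring
      _ ≤ ∑ ℓ ∈ S, ((Finset.univ.filter (fun i => f (ℓ, i) ≠ g (ℓ, i))).card : ℝ) :=
          Finset.sum_le_sum h1
      _ ≤ ∑ ℓ, ((Finset.univ.filter (fun i => f (ℓ, i) ≠ g (ℓ, i))).card : ℝ) :=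
          Finset.sum_le_sum_of_subset_of_nonneg (Finset.subset_univ S)
            (fun _ _ _ => by positivity)
      _ = (Df.card : ℝ) := by rw [hsumL]; push_cast; rfl
  -- right counting
  have hsumR : Df.card
      = ∑ r, (Finset.univ.filter (fun j => f (σ.symm (r, j)) ≠ g (σ.symm (r, j)))).card := by
    rw [hDfdef, Finset.card_filter]
    rw [← Equiv.sum_comp σ.symm (fun e => if f e ≠ g e then 1 else 0)]
    rw [Fintype.sum_prod_type]
    exact Finset.sum_congr rfl fun r _ => (Finset.card_filter _ _).symm
  have hDright : δ₀ * d * T.card ≤ (Df.card : ℝ) := by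
    have h1 : ∀ r ∈ T, δ₀ * d
        ≤ ((Finset.univ.filter (fun j => f (σ.symm (r, j)) ≠ g (σ.symm (r, j)))).card : ℝ) := by
      intro r hr
      have hne : (fun j => f (σ.symm (r, j))) ≠ (fun j => g (σ.symm (r, j))) :=
        (Finset.mem_filter.1 hr).2
      simpa [hammingDist] using hC₀ _ (hfR r) _ (hgR r) hne
    calc δ₀ * d * T.card = ∑ _r ∈ T, δ₀ * d := by rw [Finset.sum_const]; ring
      _ ≤ ∑ r ∈ T, ((Finset.univ.filter
            (fun j => f (σ.symm (r, j)) ≠ g (σ.symm (r, j)))).card : ℝ) :=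
          Finset.sum_le_sum h1
      _ ≤ ∑ r, ((Finset.univ.filter
            (fun j => f (σ.symm (r, j)) ≠ g (σ.symm (r, j)))).card : ℝ) :=
          Finset.sum_le_sum_of_subset_of_nonneg (Finset.subset_univ T)
            (fun _ _ _ => by positivity)
      _ = (Df.card : ℝ) := by rw [hsumR]; push_cast; rfl
  -- indicator functions
  set F : Fin n → ℝ := fun ℓ => if ℓ ∈ S then 1 else 0 with hF
  set G : Fin n → ℝ := fun r => if r ∈ T then 1 else 0 with hG
  have hFG : (Df.card : ℝ) ≤ ∑ e : Fin n × Fin d, F e.1 * G (σ e).1 := by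
    rw [hDfdef, Finset.card_filter]
    push_cast
    apply Finset.sum_le_sum
    intro e _
    by_cases h : f e ≠ g e
    · have h1 : e.1 ∈ S := by
        rw [hSdef, Finset.mem_filter]
        refine ⟨Finset.mem_univ _, fun hc => h ?_⟩
        have := congrFun hc e.2
        simpa using this
      have h2 : (σ e).1 ∈ T := by
        rw [hTdef, Finset.mem_filter]
        refine ⟨Finset.mem_univ _, fun hc => h ?_⟩
        have := congrFun hc (σ e).2
        simpa only [Prod.mk.eta, Equiv.symm_apply_apply] using this
      simp [hF, hG, h1, h2, h]
    · have : F e.1 * G (σ e).1 ≥ 0 := by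
        apply mul_nonneg <;> simp only [hF, hG] <;> split_ifs <;> norm_num
      simpa [h] using this
  have hFsum : ∑ ℓ, F ℓ = S.card := by
    simp [hF, Finset.sum_ite_mem]
  have hGsum : ∑ r, G r = T.card := by
    simp [hG, Finset.sum_ite_mem]
  have hFsq : ∑ ℓ, F ℓ ^ 2 = S.card := by
    have : ∀ ℓ, F ℓ ^ 2 = F ℓ := by
      intro ℓ; simp only [hF]; split_ifs <;> norm_num
    simp only [this]; exact hFsum
  have hGsq : ∑ r, G r ^ 2 = T.card := by
    have : ∀ r, G r ^ 2 = G r := by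
      intro r; simp only [hG]; split_ifs <;> norm_num
    simp only [this]; exact hGsum
  have hmix' := hmix F G
  rw [hFsum, hGsum, hFsq, hGsq] at hmix'
  have hupper := (abs_le.1 hmix').2
  -- abbreviations
  set a : ℝ := (S.card : ℝ) / n with ha'
  set b : ℝ := (T.card : ℝ) / n with hb'
  set D : ℝ := (Df.card : ℝ) / ((n:ℝ) * d) with hD'
  -- nonemptiness
  obtain ⟨e₀, he₀⟩ := Function.ne_iff.1 hfg
  have hSne : e₀.1 ∈ S := by
    rw [hSdef, Finset.mem_filter]
    refine ⟨Finset.mem_univ _, fun hc => he₀ ?_⟩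
    have := congrFun hc e₀.2
    simpa using this
  have hTne : (σ e₀).1 ∈ T := by
    rw [hTdef, Finset.mem_filter]
    refine ⟨Finset.mem_univ _, fun hc => he₀ ?_⟩
    have := congrFun hc (σ e₀).2
    simpa only [Prod.mk.eta, Equiv.symm_apply_apply] using this
  have haPos : 0 < a := by
    apply div_pos _ hn'
    exact_mod_cast Finset.card_pos.2 ⟨_, hSne⟩
  have hbPos : 0 < b := by
    apply div_pos _ hn'
    exact_mod_cast Finset.card_pos.2 ⟨_, hTne⟩
  -- key inequalities in terms of a, b, D
  have h1' : δ₀ * a ≤ D := by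
    rw [ha', hD']
    have : δ₀ * ((S.card : ℝ) / n) = δ₀ * d * S.card / ((n:ℝ) * d) := by
      field_simp
    rw [this]
    exact div_le_div_of_nonneg_right hDleft hN.le |>.trans_eq rfl
  have h2' : δ₀ * b ≤ D := by
    rw [hb', hD']
    have : δ₀ * ((T.card : ℝ) / n) = δ₀ * d * T.card / ((n:ℝ) * d) := by
      field_simp
    rw [this]
    exact div_le_div_of_nonneg_right hDright hN.le
  have h3 : D ≤ a * b + lam * Real.sqrt a * Real.sqrt b := by
    have hE : D ≤ (∑ e : Fin n × Fin d, F e.1 * G (σ e).1) / ((n:ℝ) * d) := by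
      rw [hD']
      exact div_le_div_of_nonneg_right hFG hN.le
    linarith [hupper]
  exact tanner_arith δ₀ lam a b D hδ₀0 haPos hbPos h1' h2' h3
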